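/- Let r ≥ 1 and let m_1, …, m_r be integers with m_j ≥ 2 for all j. Then for every n ≥ 0, the coefficient of q^n in the power series H_{(m_1,…,m_r)} is divisible by the product ∏_{t=1}^{r} 𝓜(m_t, t). -/

import Mathlib

/-- The operator `U_m` on `ℤ⟦q⟧`, sending `∑ a(n) qⁿ` to `∑ a(m·n) qⁿ`. -/
noncomputable def U (m : ℕ) (f : PowerSeries ℤ) : PowerSeries ℤ :=
  PowerSeries.mk fun n => PowerSeries.coeff (m * n) f

/-- `h r = q / (1-q)^(r+1)`; here `invUnitsSub 1` is the inverse of `1 - q` in `ℤ⟦q⟧`. -/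
noncomputable def h (r : ℕ) : PowerSeries ℤ :=
  PowerSeries.X * (PowerSeries.invUnitsSub (1 : ℤˣ)) ^ (r + 1)

/-- Auxiliary: the series `H` defined by recursion on a reversed index list. -/
noncomputable def HserRev : List ℕ → PowerSeries ℤ
  | [] => PowerSeries.X * PowerSeries.invUnitsSub (1 : ℤˣ)
  | mhead :: rest => U mhead (PowerSeries.invUnitsSub (1 : ℤˣ) * HserRev rest)

/-- `Hser [m₁, …, m_k] = H_{(m₁,…,m_k)}`: one has `Hser [] = H_∅ = q/(1-q)` and
`H_{(m₁,…,m_k)} = U_{m_k}((1/(1-q)) · H_{(m₁,…,m_{k-1})})`. -/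
noncomputable def Hser (l : List ℕ) : PowerSeries ℤ := HserRev l.reverse

/-- `𝓜(m,r) = m / gcd(m, lcm(1,…,r))`. -/
def Mcal (m r : ℕ) : ℕ := m / Nat.gcd m ((Finset.Icc 1 r).lcm id)

open Finset PowerSeries fwdDiff

/-! ### Sorted list of `Icc 1 r` -/

lemma sort_Icc_eq_range' (a b : ℕ) :
    (Finset.Icc a b).sort (· ≤ ·) = List.range' a (b + 1 - a) := by
  refine (fun hp hs => List.Perm.eq_of_pairwise' (Finset.pairwise_sort _ _) hs hp) ?_ ?_
  · rw [← Multiset.coe_eq_coe, Finset.sort_eq, Nat.Icc_eq_range']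
  · exact (List.pairwise_lt_range' (s := a) (n := b + 1 - a) 1 (by simp)).imp Nat.le_of_lt

lemma Hser_list (r : ℕ) (m : ℕ → ℕ) :
    ((((Finset.Icc 1 (r + 1)).sort (· ≤ ·)).map m).reverse)
      = m (r + 1) :: ((((Finset.Icc 1 r).sort (· ≤ ·)).map m).reverse) := by
  rw [sort_Icc_eq_range', sort_Icc_eq_range']
  have h1 : r + 1 + 1 - 1 = r + 1 := by omega
  have h2 : r + 1 - 1 = r := by omega
  rw [h1, h2, List.range'_1_concat]
  simp [Nat.add_comm 1 r]

/-! ### Key arithmetic divisibility -/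

lemma mcal_dvd_choose (μ k i n : ℕ) (hi1 : 1 ≤ i) (hik : i ≤ k) :
    Mcal μ k ∣ (μ * n).choose i := by
  set L := (Finset.Icc 1 k).lcm id with hL
  have hiL : i ∣ L := Finset.dvd_lcm (by simp only [Finset.mem_Icc]; omega)
  rcases Nat.eq_zero_or_pos μ with rfl | hμ
  · have : Mcal 0 k = 0 := by
      simp [Mcal]
    rw [this, Nat.zero_mul, Nat.choose_eq_zero_of_lt hi1]
  have key : μ ∣ i * (μ * n).choose i := by
    rcases Nat.eq_zero_or_pos n with rfl | hn
    · simp [Nat.choose_eq_zero_of_lt hi1]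
    obtain ⟨i', rfl⟩ : ∃ i', i = i' + 1 := ⟨i - 1, by omega⟩
    have h1 : 1 ≤ μ * n := Nat.mul_pos hμ hn
    have h2 := Nat.add_one_mul_choose_eq (μ * n - 1) i'
    have h2' : μ * n - 1 + 1 = μ * n := by omega
    rw [h2'] at h2
    refine ⟨n * (μ * n - 1).choose i', ?_⟩
    calc (i' + 1) * (μ * n).choose (i' + 1)
        = (μ * n).choose (i' + 1) * (i' + 1) := Nat.mul_comm _ _
      _ = μ * n * (μ * n - 1).choose i' := h2.symm
      _ = μ * (n * (μ * n - 1).choose i') := by ring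
  have key2 : μ ∣ (μ * n).choose i * L := by
    obtain ⟨d, hd⟩ := hiL
    rw [hd, show (μ * n).choose i * (i * d) = i * (μ * n).choose i * d by ring]
    exact key.mul_right d
  set g := Nat.gcd μ L with hg
  have hgpos : 0 < g := Nat.gcd_pos_of_pos_left L hμ
  have h3 : (μ / g) * g ∣ ((μ * n).choose i * (L / g)) * g := by
    rw [Nat.div_mul_cancel (Nat.gcd_dvd_left μ L), mul_assoc,
      Nat.div_mul_cancel (Nat.gcd_dvd_right μ L)]
    exact key2
  have h4 : μ / g ∣ (μ * n).choose i * (L / g) :=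
    (Nat.mul_dvd_mul_iff_right hgpos).mp h3
  have h5 : Nat.Coprime (μ / g) (L / g) := Nat.coprime_div_gcd_div_gcd hgpos
  exact h5.dvd_of_dvd_mul_right h4

/-! ### Finite differences of dilated binomial coefficients -/

lemma fwdDiff_dilate (μ i a : ℕ) :
    Δ_[1] (fun n : ℕ => (((μ * n + a).choose (i + 1) : ℤ))) =
      fun n : ℕ => ∑ t ∈ Finset.range μ, (((μ * n + (a + t)).choose i : ℤ)) := by
  funext n
  have tel : ∑ t ∈ Finset.range μ,
      ((((μ * n + a) + (t + 1)).choose (i + 1) : ℤ) - (((μ * n + a) + t).choose (i + 1) : ℤ))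
      = (((μ * n + a) + μ).choose (i + 1) : ℤ) - (((μ * n + a) + 0).choose (i + 1) : ℤ) :=
    Finset.sum_range_sub (fun t => (((μ * n + a) + t).choose (i + 1) : ℤ)) μ
  have step : ∀ t : ℕ,
      (((μ * n + a) + (t + 1)).choose (i + 1) : ℤ) - (((μ * n + a) + t).choose (i + 1) : ℤ)
        = ((μ * n + (a + t)).choose i : ℤ) := by
    intro t
    have hpascal : ((μ * n + a) + t + 1).choose (i + 1)
        = ((μ * n + a) + t).choose i + ((μ * n + a) + t).choose (i + 1) :=
      Nat.choose_succ_succ _ i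
    have harg : μ * n + (a + t) = (μ * n + a) + t := by omega
    have harg2 : (μ * n + a) + (t + 1) = ((μ * n + a) + t) + 1 := by omega
    rw [harg, harg2, hpascal]
    push_cast
    ring
  rw [fwdDiff]
  have h1 : μ * (n + 1) + a = (μ * n + a) + μ := by ring
  have h2 : μ * n + a = (μ * n + a) + 0 := by omega
  rw [h1]
  nth_rewrite 2 [h2]
  rw [← tel]
  exact Finset.sum_congr rfl (fun t _ => step t)

lemma fwdDiff_iter_dilate (μ i : ℕ) : ∀ a : ℕ,
    (Δ_[(1:ℕ)])^[i + 1] (fun n : ℕ => ((μ * n + a).choose i : ℤ)) = 0 := by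
  induction i with
  | zero =>
    intro a
    have : (fun n : ℕ => ((μ * n + a).choose 0 : ℤ)) = fun _ : ℕ => (1 : ℤ) := by
      funext n; simp
    rw [this, Function.iterate_one, fwdDiff_const]
    rfl
  | succ i IH =>
    intro a
    rw [Function.iterate_succ_apply, fwdDiff_dilate]
    have hsum : (fun n : ℕ => ∑ t ∈ Finset.range μ, (((μ * n + (a + t)).choose i : ℤ)))
        = ∑ t ∈ Finset.range μ, (fun n : ℕ => (((μ * n + (a + t)).choose i : ℤ))) := by
      funext n; simp
    rw [hsum, fwdDiff_iter_finset_sum]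
    refine Finset.sum_eq_zero fun t _ => IH (a + t)

lemma fwdDiff_iter_zero_fun (d : ℕ) : (Δ_[(1:ℕ)])^[d] (0 : ℕ → ℤ) = 0 := by
  induction d with
  | zero => rfl
  | succ d IH =>
    rw [Function.iterate_succ_apply', IH]
    funext n; simp [fwdDiff]

/-! ### Expansion of `C(μn, i)` in the binomial basis, with divisibility -/

lemma choose_dilate_expansion (μ k i : ℕ) :
    ∃ e : ℕ → ℤ, (∀ j, ((Mcal μ k : ℕ) : ℤ) ∣ e j) ∧
      (1 ≤ i → i ≤ k → ∀ n : ℕ,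
        ((μ * n).choose i : ℤ) = ∑ j ∈ Finset.Icc 1 k, e j * (n.choose j : ℤ)) := by
  by_cases hik : 1 ≤ i ∧ i ≤ k
  swap
  · refine ⟨0, fun j => dvd_zero _, fun h1 h2 => absurd ⟨h1, h2⟩ hik⟩
  obtain ⟨hi1, hk⟩ := hik
  set f : ℕ → ℤ := fun n => ((μ * n).choose i : ℤ) with hf
  have hfs : ∀ s : ℕ, ((Mcal μ k : ℕ) : ℤ) ∣ f s := fun s =>
    Int.natCast_dvd_natCast.mpr (mcal_dvd_choose μ k i s hi1 hk)
  refine ⟨fun j => (Δ_[(1:ℕ)])^[j] f 0, fun j => ?_, fun _ _ n => ?_⟩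
  · show ((Mcal μ k : ℕ) : ℤ) ∣ (Δ_[(1:ℕ)])^[j] f 0
    rw [fwdDiff_iter_eq_sum_shift]
    refine Finset.dvd_sum fun s _ => ?_
    rw [zsmul_eq_mul]
    exact (hfs _).mul_left _
  · -- vanishing of high differences
    have hvanish : ∀ j, i < j → (Δ_[(1:ℕ)])^[j] f 0 = 0 := by
      intro j hj
      obtain ⟨d, rfl⟩ : ∃ d, j = d + (i + 1) := ⟨j - (i + 1), by omega⟩
      have hf0 : f = fun n : ℕ => ((μ * n + 0).choose i : ℤ) := by
        funext n; simp [hf]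
      rw [Function.iterate_add_apply, hf0, fwdDiff_iter_dilate μ i 0,
        fwdDiff_iter_zero_fun]
      rfl
    have newton := shift_eq_sum_fwdDiff_iter (1 : ℕ) f n 0
    simp only [zero_add, smul_eq_mul, mul_one] at newton
    have newton' : f n = ∑ j ∈ Finset.range (n + 1), (n.choose j : ℤ) * (Δ_[(1:ℕ)])^[j] f 0 := by
      rw [newton]
      refine Finset.sum_congr rfl fun j _ => ?_
      rw [nsmul_eq_mul]
    have h1 : ∑ j ∈ Finset.range (n + 1), (n.choose j : ℤ) * (Δ_[(1:ℕ)])^[j] f 0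
        = ∑ j ∈ Finset.range (n + 1) ∪ Finset.Icc 1 k, (n.choose j : ℤ) * (Δ_[(1:ℕ)])^[j] f 0 := by
      refine Finset.sum_subset Finset.subset_union_left fun x _ hnx => ?_
      have : n < x := by
        by_contra hc
        exact hnx (Finset.mem_range.mpr (by omega))
      rw [Nat.choose_eq_zero_of_lt this]
      simp
    have h2 : ∑ j ∈ Finset.Icc 1 k, (Δ_[(1:ℕ)])^[j] f 0 * (n.choose j : ℤ)
        = ∑ j ∈ Finset.range (n + 1) ∪ Finset.Icc 1 k, (Δ_[(1:ℕ)])^[j] f 0 * (n.choose j : ℤ) := by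
      refine Finset.sum_subset Finset.subset_union_right fun x _ hnx => ?_
      rw [Finset.mem_Icc] at hnx
      push_neg at hnx
      rcases Nat.eq_zero_or_pos x with rfl | hx
      · have : f 0 = 0 := by simp [hf, Nat.choose_eq_zero_of_lt hi1]
        simp [this]
      · have hkx : k < x := hnx hx
        rw [hvanish x (by omega)]
        simp
    have goal' : f n = ∑ j ∈ Finset.Icc 1 k, (Δ_[(1:ℕ)])^[j] f 0 * (n.choose j : ℤ) := by
      rw [newton', h1, h2]
      exact Finset.sum_congr rfl fun j _ => (mul_comm _ _)
    exact goal'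

/-! ### Hockey stick -/

lemma sum_range_choose_eq (N i : ℕ) :
    ∑ j ∈ Finset.range (N + 1), j.choose i = (N + 1).choose (i + 1) := by
  induction N with
  | zero => simp [Nat.choose_succ_succ]
  | succ N IH =>
    rw [Finset.sum_range_succ, IH, Nat.choose_succ_succ (N + 1) i]
    simp only [Nat.succ_eq_add_one]
    omega

/-! ### Power series coefficient computations -/

lemma coeff_invUnitsSub_one (j : ℕ) :
    PowerSeries.coeff j (PowerSeries.invUnitsSub (1 : ℤˣ)) = 1 := by
  rw [PowerSeries.coeff_invUnitsSub]
  simp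

lemma coeff_mul_invUnitsSub (f : PowerSeries ℤ) (N : ℕ) :
    PowerSeries.coeff N (PowerSeries.invUnitsSub (1 : ℤˣ) * f)
      = ∑ j ∈ Finset.range (N + 1), PowerSeries.coeff j f := by
  rw [PowerSeries.coeff_mul,
    Finset.Nat.sum_antidiagonal_eq_sum_range_succ
      (fun a b => PowerSeries.coeff a (PowerSeries.invUnitsSub (1 : ℤˣ))
        * PowerSeries.coeff b f) N]
  simp only [coeff_invUnitsSub_one, one_mul]
  exact (Finset.sum_range_reflect (fun j => PowerSeries.coeff j f) (N + 1))

lemma coeff_HserRev_nil (j : ℕ) :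
    PowerSeries.coeff j (HserRev []) = if j = 0 then 0 else 1 := by
  cases j with
  | zero => simp [HserRev]
  | succ j =>
    simp [HserRev, PowerSeries.coeff_succ_X_mul, coeff_invUnitsSub_one]

lemma coeff_U (m n : ℕ) (f : PowerSeries ℤ) :
    PowerSeries.coeff n (U m f) = PowerSeries.coeff (m * n) f := by
  simp [U]

/-! ### Main induction -/

lemma main_aux (r : ℕ) (hr : 1 ≤ r) (m : ℕ → ℕ) :
    ∃ c : ℕ → ℤ,
      (∀ j, ((∏ t ∈ Finset.Icc 1 r, Mcal (m t) t : ℕ) : ℤ) ∣ c j) ∧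
      ∀ n, PowerSeries.coeff n (Hser (((Finset.Icc 1 r).sort (· ≤ ·)).map m))
            = ∑ j ∈ Finset.Icc 1 r, c j * (n.choose j : ℤ) := by
  induction r, hr using Nat.le_induction with
  | base =>
    refine ⟨fun j => if j = 1 then (m 1 : ℤ) else 0, ?_, ?_⟩
    · intro j
      have hM : (∏ t ∈ Finset.Icc 1 1, Mcal (m t) t : ℕ) = m 1 := by
        rw [Finset.Icc_self, Finset.prod_singleton]
        simp [Mcal]
      rw [hM]
      show ((m 1 : ℤ)) ∣ if j = 1 then (m 1 : ℤ) else 0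
      split
      · exact dvd_refl _
      · exact dvd_zero _
    · intro n
      have hlist : ((((Finset.Icc 1 1).sort (· ≤ ·)).map m).reverse) = [m 1] := by
        rw [Finset.Icc_self, Finset.sort_singleton]
        simp
      rw [Hser, hlist]
      show PowerSeries.coeff n
        (U (m 1) (PowerSeries.invUnitsSub (1 : ℤˣ) * HserRev [])) = _
      rw [coeff_U, coeff_mul_invUnitsSub]
      have hsum : ∑ j ∈ Finset.range (m 1 * n + 1), PowerSeries.coeff j (HserRev [])
          = (m 1 * n : ℕ) := by
        simp only [coeff_HserRev_nil]
        rw [Finset.sum_range_succ']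
        simp
      rw [hsum, Finset.Icc_self, Finset.sum_singleton]
      simp [Nat.choose_one_right]
  | succ r hr IH =>
    obtain ⟨c, hcdvd, hcoeff⟩ := IH
    choose E hEdvd hEexp using fun i => choose_dilate_expansion (m (r + 1)) (r + 1) i
    refine ⟨fun j => ∑ i ∈ Finset.Icc 1 r, c i * (E i j + E (i + 1) j), ?_, ?_⟩
    · intro j
      rw [Finset.prod_Icc_succ_top (by omega : 1 ≤ r + 1), Nat.cast_mul]
      refine Finset.dvd_sum fun i _ => ?_
      exact mul_dvd_mul (hcdvd i) (dvd_add (hEdvd i j) (hEdvd (i + 1) j))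
    · intro n
      set μ := m (r + 1) with hμ
      have e1 : PowerSeries.coeff n (Hser (((Finset.Icc 1 (r + 1)).sort (· ≤ ·)).map m))
          = ∑ j ∈ Finset.range (μ * n + 1),
              PowerSeries.coeff j (Hser (((Finset.Icc 1 r).sort (· ≤ ·)).map m)) := by
        rw [Hser, Hser_list r m]
        show PowerSeries.coeff n
          (U μ (PowerSeries.invUnitsSub (1 : ℤˣ)
            * HserRev ((((Finset.Icc 1 r).sort (· ≤ ·)).map m).reverse))) = _
        rw [coeff_U, coeff_mul_invUnitsSub]
        rfl
      rw [e1]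
      have e2 : ∑ j ∈ Finset.range (μ * n + 1),
            PowerSeries.coeff j (Hser (((Finset.Icc 1 r).sort (· ≤ ·)).map m))
          = ∑ i ∈ Finset.Icc 1 r, c i * (((μ * n + 1).choose (i + 1) : ℕ) : ℤ) := by
        calc ∑ j ∈ Finset.range (μ * n + 1),
              PowerSeries.coeff j (Hser (((Finset.Icc 1 r).sort (· ≤ ·)).map m))
            = ∑ j ∈ Finset.range (μ * n + 1), ∑ i ∈ Finset.Icc 1 r,
                c i * (j.choose i : ℤ) := Finset.sum_congr rfl fun j _ => hcoeff j
          _ = ∑ i ∈ Finset.Icc 1 r, ∑ j ∈ Finset.range (μ * n + 1),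
                c i * (j.choose i : ℤ) := Finset.sum_comm
          _ = ∑ i ∈ Finset.Icc 1 r, c i * (((μ * n + 1).choose (i + 1) : ℕ) : ℤ) := by
              refine Finset.sum_congr rfl fun i _ => ?_
              rw [← Finset.mul_sum]
              congr 1
              rw [← sum_range_choose_eq (μ * n) i]
              push_cast
              rfl
      rw [e2]
      have e3 : ∀ i ∈ Finset.Icc 1 r,
          c i * (((μ * n + 1).choose (i + 1) : ℕ) : ℤ)
            = ∑ j ∈ Finset.Icc 1 (r + 1),
                c i * (E i j + E (i + 1) j) * (n.choose j : ℤ) := by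
        intro i hi
        rw [Finset.mem_Icc] at hi
        have hpascal : (μ * n + 1).choose (i + 1) = (μ * n).choose i + (μ * n).choose (i + 1) :=
          Nat.choose_succ_succ (μ * n) i
        have hi' := hEexp i (by omega) (by omega) n
        have hi1' := hEexp (i + 1) (by omega) (by omega) n
        rw [hpascal]
        push_cast
        rw [hi', hi1', ← Finset.sum_add_distrib, Finset.mul_sum]
        refine Finset.sum_congr rfl fun j _ => ?_
        ring
      rw [Finset.sum_congr rfl e3, Finset.sum_comm]
      refine Finset.sum_congr rfl fun j _ => ?_
      rw [Finset.sum_mul]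

/-- Every coefficient of `H_{(m₁,…,m_r)}` is divisible by `∏_{t=1}^{r} 𝓜(m_t, t)`. -/
theorem Mcal_prod_dvd_coeff_H (r : ℕ) (hr : 1 ≤ r) (m : ℕ → ℕ)
    (hm : ∀ j, 1 ≤ j → j ≤ r → 2 ≤ m j) (n : ℕ) :
    ((∏ t ∈ Finset.Icc 1 r, Mcal (m t) t : ℕ) : ℤ) ∣
      PowerSeries.coeff n (Hser (((Finset.Icc 1 r).sort (· ≤ ·)).map m)) := by
  obtain ⟨c, hdvd, hcoeff⟩ := main_aux r hr m
  rw [hcoeff n]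
  exact Finset.dvd_sum fun j _ => (hdvd j).mul_right _
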